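/- arXiv:1709.09701 — 3 statements merged into one kernel-verified Lean document; each statement's English description precedes it below -/
import Mathlib

section
/- The discrete functional deformation field operator obtained by differentiating the discrete unified shape difference along the family of meshes p_i^t = p_i + t V_i at t = 0 coincides exactly with the discrete operator E^V built from the discrete Levi-Civita connection, i.e., d/dt|_{t=0} (W_M D_I^t) applied as a bilinear form on piecewise-linear functions equals fᵀ W_M E^V g = −Σ_T (L_V g)(∇f, ∇g)_T μ(T). -/
open Matrix

/-- The `3 × 2` edge matrix `E = (p_i − p_j, p_j − p_k)` of the triangle `T = (i,j,k)`
under the vertex embedding `p`. -/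
def faceE {n : ℕ} (p : Fin n → Fin 3 → ℝ) (T : Fin n × Fin n × Fin n) :
    Matrix (Fin 3) (Fin 2) ℝ :=
  Matrix.of fun r c => ![p T.1 - p T.2.1, p T.2.1 - p T.2.2] c r

/-- Edge differences `(f_i − f_j, f_j − f_k)` of a per-vertex function on triangle `T`. -/
def dF {n : ℕ} (f : Fin n → ℝ) (T : Fin n × Fin n × Fin n) : Fin 2 → ℝ :=
  ![f T.1 - f T.2.1, f T.2.1 - f T.2.2]

/-- Coordinates of the piecewise-constant tangential gradient of `f` on `T`:
`(EᵀE)⁻¹ dF`. -/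
noncomputable def gradCoeff {n : ℕ} (p : Fin n → Fin 3 → ℝ) (f : Fin n → ℝ)
    (T : Fin n × Fin n × Fin n) : Fin 2 → ℝ :=
  ((faceE p T)ᵀ * faceE p T)⁻¹ *ᵥ dF f T

/-- The gradient of `f` on triangle `T`, as a vector of `ℝ³`. -/
noncomputable def gradVec {n : ℕ} (p : Fin n → Fin 3 → ℝ) (f : Fin n → ℝ)
    (T : Fin n × Fin n × Fin n) : Fin 3 → ℝ :=
  faceE p T *ᵥ gradCoeff p f T

/-- Cross product of vectors in `ℝ³`. -/
def crossP (u v : Fin 3 → ℝ) : Fin 3 → ℝ :=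
  ![u 1 * v 2 - u 2 * v 1, u 2 * v 0 - u 0 * v 2, u 0 * v 1 - u 1 * v 0]

/-- Area `μ(T)` of the triangle `T` under the embedding `p`. -/
noncomputable def faceArea {n : ℕ} (p : Fin n → Fin 3 → ℝ)
    (T : Fin n × Fin n × Fin n) : ℝ :=
  Real.sqrt (∑ r, (crossP (p T.1 - p T.2.1) (p T.2.1 - p T.2.2) r) ^ 2) / 2

/-- The discrete strain tensor `(L_V g)(∇f, ∇g)_T` on triangle `T`, built from the
finite-difference connection `∇̄_E V = (V_i − V_j, V_j − V_k)`. -/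
noncomputable def strainOnGrads {n : ℕ} (p V : Fin n → Fin 3 → ℝ) (f g : Fin n → ℝ)
    (T : Fin n × Fin n × Fin n) : ℝ :=
  gradVec p f T ⬝ᵥ (faceE V T *ᵥ gradCoeff p g T) +
    (faceE V T *ᵥ gradCoeff p f T) ⬝ᵥ gradVec p g T

/-! ### Auxiliary lemmas -/

attribute [local instance] Matrix.linftyOpNormedRing Matrix.linftyOpNormedAlgebra
  Matrix.linftyOpNormedSpace

noncomputable section

instance : CompleteSpace (Matrix (Fin 2) (Fin 2) ℝ) := FiniteDimensional.complete ℝ _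

lemma faceE_displace {n : ℕ} (p V : Fin n → Fin 3 → ℝ) (T : Fin n × Fin n × Fin n) (t : ℝ) :
    faceE (fun i => p i + t • V i) T = faceE p T + t • faceE V T := by
  ext r c
  fin_cases c <;>
    simp [faceE, Matrix.add_apply, Matrix.smul_apply, Pi.add_apply, Pi.sub_apply,
      Pi.smul_apply, smul_eq_mul] <;> ring

lemma dot_mulVec_mulVec (A W : Matrix (Fin 3) (Fin 2) ℝ) (x y : Fin 2 → ℝ) :
    (A *ᵥ x) ⬝ᵥ (W *ᵥ y) = x ⬝ᵥ ((Aᵀ * W) *ᵥ y) := by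
  rw [← mulVec_mulVec, ← vecMul_transpose, ← dotProduct_mulVec]

lemma dot_mulVec_left (S : Matrix (Fin 2) (Fin 2) ℝ) (u z : Fin 2 → ℝ) :
    (S *ᵥ u) ⬝ᵥ z = u ⬝ᵥ (Sᵀ *ᵥ z) := by
  rw [← vecMul_transpose, ← dotProduct_mulVec]

lemma hasDerivAt_inv_path (M : ℝ → Matrix (Fin 2) (Fin 2) ℝ) (B : Matrix (Fin 2) (Fin 2) ℝ)
    (hM : HasDerivAt M B 0) (h : IsUnit (M 0)) :
    HasDerivAt (fun t => (M t)⁻¹) (-((M 0)⁻¹ * B * (M 0)⁻¹)) 0 := by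
  have h' := hasFDerivAt_ringInverse (𝕜 := ℝ) h.unit
  have key := h'.comp_hasDerivAt 0 hM
  have e : (fun t => (M t)⁻¹) = Ring.inverse ∘ M := by
    funext t; rw [Matrix.nonsing_inv_eq_ringInverse]; rfl
  rw [e]
  refine key.congr_deriv ?_
  · simp [IsUnit.unit_spec, Matrix.coe_units_inv, Matrix.nonsing_inv_eq_ringInverse,
      ContinuousLinearMap.neg_apply, ContinuousLinearMap.mulLeftRight_apply]

lemma hasDerivAt_M (A W : Matrix (Fin 3) (Fin 2) ℝ) :
    HasDerivAt (fun t : ℝ => (A + t • W)ᵀ * (A + t • W)) (Aᵀ * W + Wᵀ * A) 0 := by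
  have key : ∀ t : ℝ, (A + t • W)ᵀ * (A + t • W)
      = Aᵀ * A + t • (Aᵀ * W + Wᵀ * A) + (t ^ 2) • (Wᵀ * W) := by
    intro t
    simp only [transpose_add, transpose_smul, Matrix.add_mul, Matrix.mul_add, Matrix.smul_mul,
      Matrix.mul_smul, smul_smul, smul_add, pow_two]
    abel
  simp only [key]
  have h1 : HasDerivAt (fun t : ℝ => t • (Aᵀ * W + Wᵀ * A)) ((1:ℝ) • (Aᵀ * W + Wᵀ * A)) 0 :=
    (hasDerivAt_id 0).smul_const _
  have h2 : HasDerivAt (fun t : ℝ => (t ^ 2) • (Wᵀ * W)) ((2 * 0 ^ 1 : ℝ) • (Wᵀ * W)) 0 :=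
    (hasDerivAt_pow 2 0).smul_const _
  refine ((h1.const_add (Aᵀ * A)).fun_add h2).congr_deriv ?_
  simp

/-- Per-triangle version of the theorem. -/
lemma per_triangle {n : ℕ} (p V : Fin n → Fin 3 → ℝ) (T : Fin n × Fin n × Fin n)
    (hT : IsUnit ((faceE p T)ᵀ * faceE p T).det) (f g : Fin n → ℝ) :
    HasDerivAt
      (fun t : ℝ =>
        gradVec (fun i => p i + t • V i) f T ⬝ᵥ gradVec (fun i => p i + t • V i) g T)
      (-strainOnGrads p V f g T) 0 := by
  set A := faceE p T with hA
  set Wm := faceE V T with hW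
  set u := dF f T with hu
  set v := dF g T with hv
  set M : ℝ → Matrix (Fin 2) (Fin 2) ℝ := fun t => (A + t • Wm)ᵀ * (A + t • Wm) with hMdef
  set B : Matrix (Fin 2) (Fin 2) ℝ := Aᵀ * Wm + Wmᵀ * A with hB
  have hM0 : M 0 = Aᵀ * A := by simp [hMdef]
  have hMsymm : ∀ t, (M t)ᵀ = M t := fun t => by
    simp [hMdef, transpose_mul]
  have hinvsymm : ∀ t, ((M t)⁻¹)ᵀ = (M t)⁻¹ := fun t => by
    rw [Matrix.transpose_nonsing_inv, hMsymm]
  have hU0det : IsUnit (M 0).det := by rw [hM0]; exact hT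
  have hU0 : IsUnit (M 0) := (Matrix.isUnit_iff_isUnit_det _).2 hU0det
  have hMd : HasDerivAt M B 0 := hasDerivAt_M A Wm
  have hinvd : HasDerivAt (fun t => (M t)⁻¹) (-((M 0)⁻¹ * B * (M 0)⁻¹)) 0 :=
    hasDerivAt_inv_path M B hMd hU0
  -- the scalar bilinear observable
  let L : Matrix (Fin 2) (Fin 2) ℝ →ₗ[ℝ] ℝ :=
    { toFun := fun x => u ⬝ᵥ (x *ᵥ v)
      map_add' := fun x y => by simp [Matrix.add_mulVec, dotProduct_add] <;> ring
      map_smul' := fun c x => by simp [Matrix.smul_mulVec] <;> ring }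
  have hψ : HasDerivAt (fun t => u ⬝ᵥ ((M t)⁻¹ *ᵥ v))
      (u ⬝ᵥ ((-((M 0)⁻¹ * B * (M 0)⁻¹)) *ᵥ v)) 0 := by
    have := (LinearMap.toContinuousLinearMap L).hasFDerivAt
      (x := (M 0)⁻¹) |>.comp_hasDerivAt 0 hinvd
    exact this
  -- eventual equality of the two functions near 0
  have hdetcont : ContinuousAt (fun t => (M t).det) 0 :=
    (Continuous.matrix_det continuous_id).continuousAt.comp hMd.continuousAt
  have hdet0 : (M 0).det ≠ 0 := IsUnit.ne_zero hU0det
  have hev : ∀ᶠ t in nhds (0:ℝ), (M t).det ≠ 0 := hdetcont.eventually_ne hdet0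
  have heq : (fun t : ℝ =>
        gradVec (fun i => p i + t • V i) f T ⬝ᵥ gradVec (fun i => p i + t • V i) g T)
      =ᶠ[nhds (0:ℝ)] fun t => u ⬝ᵥ ((M t)⁻¹ *ᵥ v) := by
    filter_upwards [hev] with t ht
    have hUt : IsUnit (M t).det := isUnit_iff_ne_zero.2 ht
    have hfE : faceE (fun i => p i + t • V i) T = A + t • Wm := faceE_displace p V T t
    have hgf : gradVec (fun i => p i + t • V i) f T = (A + t • Wm) *ᵥ ((M t)⁻¹ *ᵥ u) := by
      rw [gradVec, gradCoeff, hfE]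
    have hgg : gradVec (fun i => p i + t • V i) g T = (A + t • Wm) *ᵥ ((M t)⁻¹ *ᵥ v) := by
      rw [gradVec, gradCoeff, hfE]
    rw [hgf, hgg, dot_mulVec_mulVec]
    have : M t *ᵥ ((M t)⁻¹ *ᵥ v) = v := by
      rw [mulVec_mulVec, Matrix.mul_nonsing_inv _ hUt, one_mulVec]
    rw [show (A + t • Wm)ᵀ * (A + t • Wm) = M t from rfl, mulVec_mulVec,
      Matrix.mul_nonsing_inv _ hUt, one_mulVec, dot_mulVec_left, hinvsymm]
  -- identify the derivative value with the strain
  have hstrain : strainOnGrads p V f g T = u ⬝ᵥ (((M 0)⁻¹ * B * (M 0)⁻¹) *ᵥ v) := by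
    have hα : gradCoeff p f T = (M 0)⁻¹ *ᵥ u := by rw [gradCoeff, hM0]
    have hβ : gradCoeff p g T = (M 0)⁻¹ *ᵥ v := by rw [gradCoeff, hM0]
    rw [strainOnGrads, gradVec, gradVec, hα, hβ,
      dot_mulVec_mulVec, dot_mulVec_mulVec, ← dotProduct_add, ← Matrix.add_mulVec, ← hB,
      dot_mulVec_left, hinvsymm, mulVec_mulVec, mulVec_mulVec, Matrix.mul_assoc]
  have final := hψ.congr_of_eventuallyEq heq
  rw [Matrix.neg_mulVec, dotProduct_neg, ← hstrain] at final
  exact final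

end


/-- For a triangle mesh with vertices displaced along `p_i^t = p_i + tV_i`,
the bilinear form of the discrete unified shape difference,
`fᵀ W_M D_I^t g = Σ_T ⟨∇_t f, ∇_t g⟩ μ^0(T)` (gradients on the deformed mesh, areas on
the original mesh), has derivative at `t = 0` exactly equal to the bilinear form of the
connection-based discrete functional deformation field,
`fᵀ W_M E^V g = −Σ_T (L_V g)(∇f, ∇g)_T μ(T)`; i.e. the two discretizations coincide. -/
theorem discrete_unified_shape_difference_derivative_eq_connection_discretization
    (n : ℕ) (F : Finset (Fin n × Fin n × Fin n))
    (p V : Fin n → Fin 3 → ℝ)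
    (hnd : ∀ T ∈ F, IsUnit ((faceE p T)ᵀ * faceE p T).det)
    (f g : Fin n → ℝ) :
    HasDerivAt
      (fun t : ℝ => ∑ T ∈ F,
        (gradVec (fun i => p i + t • V i) f T ⬝ᵥ gradVec (fun i => p i + t • V i) g T) *
          faceArea p T)
      (-∑ T ∈ F, strainOnGrads p V f g T * faceArea p T) 0 := by
  have h : HasDerivAt
      (fun t : ℝ => ∑ T ∈ F,
        (gradVec (fun i => p i + t • V i) f T ⬝ᵥ gradVec (fun i => p i + t • V i) g T) *
          faceArea p T)
      (∑ T ∈ F, -strainOnGrads p V f g T * faceArea p T) 0 :=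
    HasDerivAt.fun_sum fun T hT => (per_triangle p V T (hnd T hT) f g).mul_const _
  simpa [neg_mul, Finset.sum_neg_distrib] using h
end

section
/- The discrete infinitesimal shape differences satisfy the exact decomposition fᵀ W E^V_C g = fᵀ W E^V g + Σ_{T∈F} div(V)_T ⟨∇f, ∇g⟩_T μ(T) for all piecewise-linear functions f, g, where div(V)_T = Tr((EᵀE)^{-1} Eᵀ (∇̄_E V)) is the per-triangle discrete divergence. -/
open Matrix

/-- The per-triangle discrete divergence `div(V)_T = Tr((EᵀE)⁻¹ Eᵀ (∇̄_E V))`. -/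
noncomputable def faceDiv {n : ℕ} (p V : Fin n → Fin 3 → ℝ)
    (T : Fin n × Fin n × Fin n) : ℝ :=
  Matrix.trace (((faceE p T)ᵀ * faceE p T)⁻¹ * ((faceE p T)ᵀ * faceE V T))

/-! ### Auxiliary lemmas -/


lemma faceE_deform {n : ℕ} (p V : Fin n → Fin 3 → ℝ) (t : ℝ) (T : Fin n × Fin n × Fin n) :
    faceE (fun i => p i + t • V i) T = faceE p T + t • faceE V T := by
  ext r c
  fin_cases c <;>
    simp [faceE, Matrix.add_apply, Matrix.smul_apply, Pi.sub_apply, Pi.add_apply,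
      Pi.smul_apply, smul_eq_mul] <;> ring

lemma gram_entry (M N : Matrix (Fin 3) (Fin 2) ℝ) (i j : Fin 2) :
    (Mᵀ * N) i j = ∑ r, M r i * N r j := by
  simp [Matrix.mul_apply]

lemma det_eq_cross {n : ℕ} (p' : Fin n → Fin 3 → ℝ) (T : Fin n × Fin n × Fin n) :
    ((faceE p' T)ᵀ * faceE p' T).det
      = ∑ r, (crossP (p' T.1 - p' T.2.1) (p' T.2.1 - p' T.2.2) r) ^ 2 := by
  simp [Matrix.det_fin_two, gram_entry, crossP, faceE, Fin.sum_univ_three, Pi.sub_apply]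
  ring

lemma area_sqrtDet {n : ℕ} (p' : Fin n → Fin 3 → ℝ) (T : Fin n × Fin n × Fin n) :
    faceArea p' T = Real.sqrt (((faceE p' T)ᵀ * faceE p' T).det) / 2 := by
  rw [faceArea, det_eq_cross]

lemma dot3 (U W : Matrix (Fin 3) (Fin 2) ℝ) (x y : Fin 2 → ℝ) :
    (U *ᵥ x) ⬝ᵥ (W *ᵥ y) = x ⬝ᵥ ((Uᵀ * W) *ᵥ y) := by
  simp [dotProduct, Matrix.mulVec, Matrix.mul_apply, Fin.sum_univ_three, Fin.sum_univ_two]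
  ring

lemma inner_formula (M : Matrix (Fin 3) (Fin 2) ℝ) (a b : Fin 2 → ℝ) :
    (M *ᵥ ((Mᵀ * M)⁻¹ *ᵥ a)) ⬝ᵥ (M *ᵥ ((Mᵀ * M)⁻¹ *ᵥ b)) =
      (a ⬝ᵥ (Matrix.adjugate (Mᵀ * M) *ᵥ b)) / (Mᵀ * M).det := by
  set G := Mᵀ * M with hG
  by_cases h : IsUnit G.det
  · have hd : G.det ≠ 0 := h.ne_zero
    rw [Matrix.inv_def, Ring.inverse_eq_inv']
    rw [Matrix.smul_mulVec, Matrix.smul_mulVec]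
    rw [Matrix.mulVec_smul, Matrix.mulVec_smul]
    rw [smul_dotProduct, dotProduct_smul]
    rw [dot3, ← hG, Matrix.mulVec_mulVec, Matrix.mul_adjugate]
    rw [Matrix.smul_mulVec, Matrix.one_mulVec, dotProduct_smul]
    rw [smul_eq_mul, smul_eq_mul, smul_eq_mul]
    have hsym : G 0 1 = G 1 0 := by
      simp [hG, Matrix.mul_apply, mul_comm]
    rw [dotProduct_comm]
    have : b ⬝ᵥ G.adjugate *ᵥ a = a ⬝ᵥ G.adjugate *ᵥ b := by
      simp [Matrix.adjugate_fin_two, Matrix.mulVec, dotProduct, Fin.sum_univ_two, hsym]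
      ring
    rw [this]
    field_simp
  · have hz : G.det = 0 := by
      by_contra h0; exact h (isUnit_iff_ne_zero.mpr h0)
    rw [Matrix.nonsing_inv_apply_not_isUnit _ h, hz]
    simp

lemma quad_identity (G Gd : Matrix (Fin 2) (Fin 2) ℝ) (hG : G 0 1 = G 1 0)
    (hGd : Gd 0 1 = Gd 1 0) (a b : Fin 2 → ℝ) :
    (G.adjugate *ᵥ a) ⬝ᵥ (Gd *ᵥ (G.adjugate *ᵥ b)) =
      (a ⬝ᵥ (G.adjugate *ᵥ b)) * Matrix.trace (G.adjugate * Gd) -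
        (a ⬝ᵥ (Gd.adjugate *ᵥ b)) * G.det := by
  simp [Matrix.adjugate_fin_two, Matrix.mulVec, Matrix.vecMul, dotProduct, Fin.sum_univ_two,
    Matrix.trace_fin_two, Matrix.mul_apply, Matrix.det_fin_two, hG, hGd]
  ring

lemma trace_symm (M B : Matrix (Fin 3) (Fin 2) ℝ) :
    Matrix.trace ((Mᵀ * M).adjugate * (Bᵀ * M)) =
      Matrix.trace ((Mᵀ * M).adjugate * (Mᵀ * B)) := by
  simp [Matrix.adjugate_fin_two, Matrix.trace_fin_two, Matrix.mul_apply, Matrix.vecMul,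
    dotProduct, Fin.sum_univ_three, Fin.sum_univ_two]
  ring

lemma div_formula (M B : Matrix (Fin 3) (Fin 2) ℝ) (hd : (Mᵀ * M).det ≠ 0) :
    Matrix.trace ((Mᵀ * M)⁻¹ * (Mᵀ * B)) =
      Matrix.trace ((Mᵀ * M).adjugate * (Mᵀ * B + Bᵀ * M)) / (2 * (Mᵀ * M).det) := by
  rw [Matrix.inv_def, Ring.inverse_eq_inv', Matrix.smul_mul, Matrix.trace_smul,
    Matrix.mul_add, Matrix.trace_add, trace_symm]
  rw [smul_eq_mul]
  field_simp
  ring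

lemma strain_formula (M B : Matrix (Fin 3) (Fin 2) ℝ) (a b : Fin 2 → ℝ)
    (hd : (Mᵀ * M).det ≠ 0) :
    (M *ᵥ ((Mᵀ * M)⁻¹ *ᵥ a)) ⬝ᵥ (B *ᵥ ((Mᵀ * M)⁻¹ *ᵥ b)) +
      (B *ᵥ ((Mᵀ * M)⁻¹ *ᵥ a)) ⬝ᵥ (M *ᵥ ((Mᵀ * M)⁻¹ *ᵥ b)) =
    ((a ⬝ᵥ ((Mᵀ * M).adjugate *ᵥ b)) * Matrix.trace ((Mᵀ * M).adjugate * (Mᵀ * B + Bᵀ * M))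
      - (a ⬝ᵥ ((Mᵀ * B + Bᵀ * M).adjugate *ᵥ b)) * (Mᵀ * M).det) / (Mᵀ * M).det ^ 2 := by
  have hsymG : (Mᵀ * M) 0 1 = (Mᵀ * M) 1 0 := by
    simp [Matrix.mul_apply, mul_comm]
  have hsymGd : (Mᵀ * B + Bᵀ * M) 0 1 = (Mᵀ * B + Bᵀ * M) 1 0 := by
    simp [Matrix.mul_apply, Matrix.add_apply, mul_comm]
    ring
  rw [dot3, dot3]
  rw [Matrix.inv_def, Ring.inverse_eq_inv']
  simp only [Matrix.smul_mulVec, Matrix.mulVec_smul, smul_dotProduct,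
    dotProduct_smul, smul_eq_mul]
  have key := quad_identity (Mᵀ * M) (Mᵀ * B + Bᵀ * M) hsymG hsymGd a b
  rw [Matrix.add_mulVec, dotProduct_add] at key
  have harr : ∀ X Y : ℝ, (Mᵀ * M).det⁻¹ * ((Mᵀ * M).det⁻¹ * X) +
      (Mᵀ * M).det⁻¹ * ((Mᵀ * M).det⁻¹ * Y) = (X + Y) / (Mᵀ * M).det ^ 2 := by
    intro X Y
    rw [eq_div_iff (pow_ne_zero 2 hd)]
    field_simp
  rw [harr, key]

lemma scalar_final (s N0 Q' N' : ℝ) (hs : 0 < s) :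
    ((N' * s ^ 2 - N0 * Q') / (s ^ 2) ^ 2) * (Real.sqrt (s ^ 2) / 2) +
        (N0 / s ^ 2) * (Q' / (2 * Real.sqrt (s ^ 2)) / 2) =
      -(((N0 * Q' - N' * s ^ 2) / (s ^ 2) ^ 2) * (Real.sqrt (s ^ 2) / 2)) +
        (Q' / (2 * s ^ 2)) * (N0 / s ^ 2) * (Real.sqrt (s ^ 2) / 2) := by
  rw [Real.sqrt_sq hs.le]
  have hsne : s ≠ 0 := hs.ne'
  field_simp
  ring

set_option maxHeartbeats 1000000 in
lemma key_deriv {n : ℕ} (p V : Fin n → Fin 3 → ℝ) (f g : Fin n → ℝ)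
    (T : Fin n × Fin n × Fin n) (h : IsUnit ((faceE p T)ᵀ * faceE p T).det) :
    HasDerivAt (fun t : ℝ =>
        (gradVec (fun i => p i + t • V i) f T ⬝ᵥ gradVec (fun i => p i + t • V i) g T) *
          faceArea (fun i => p i + t • V i) T)
      (-(strainOnGrads p V f g T * faceArea p T) +
        faceDiv p V T * (gradVec p f T ⬝ᵥ gradVec p g T) * faceArea p T) 0 := by
  set A := faceE p T with hA
  set B := faceE V T with hB
  set a := dF f T with ha
  set b := dF g T with hb
  have hd : (Aᵀ * A).det ≠ 0 := h.ne_zero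
  have hdpos : 0 < (Aᵀ * A).det := by
    rcases lt_or_eq_of_le (by rw [hA, det_eq_cross]; positivity :
      (0:ℝ) ≤ (Aᵀ * A).det) with h1 | h1
    · exact h1
    · exact absurd h1.symm hd
  have h0 : A + (0:ℝ) • B = A := by simp
  set Gt : ℝ → Matrix (Fin 2) (Fin 2) ℝ := fun t => (A + t • B)ᵀ * (A + t • B) with hGt
  set Nf : ℝ → ℝ := fun t => a ⬝ᵥ ((Gt t).adjugate *ᵥ b) with hNf
  set Qf : ℝ → ℝ := fun t => (Gt t).det with hQf
  have hG0 : Gt 0 = Aᵀ * A := by rw [hGt]; simp [h0]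
  have hQ0 : Qf 0 = (Aᵀ * A).det := by rw [hQf]; simp [hG0]
  have hN0 : Nf 0 = a ⬝ᵥ ((Aᵀ * A).adjugate *ᵥ b) := by rw [hNf]; simp [hG0]
  -- entrywise derivatives of the Gram matrix
  have hent : ∀ i j : Fin 2, HasDerivAt (fun t : ℝ => Gt t i j) ((Aᵀ * B + Bᵀ * A) i j) 0 := by
    intro i j
    have heq : (fun t : ℝ => Gt t i j)
        = fun t => ∑ r : Fin 3, (A r i + t * B r i) * (A r j + t * B r j) := by
      funext t
      rw [hGt]
      simp [Matrix.mul_apply, Matrix.add_apply, Matrix.smul_apply, smul_eq_mul]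
    rw [heq]
    have hsum : HasDerivAt (fun t : ℝ => ∑ r : Fin 3, (A r i + t * B r i) * (A r j + t * B r j))
        (∑ r : Fin 3, (B r i * A r j + A r i * B r j)) 0 := by
      apply HasDerivAt.fun_sum
      intro r _
      have h1 : HasDerivAt (fun t : ℝ => A r i + t * B r i) (B r i) 0 := by
        simpa using ((hasDerivAt_id (0:ℝ)).mul_const (B r i)).const_add (A r i)
      have h2 : HasDerivAt (fun t : ℝ => A r j + t * B r j) (B r j) 0 := by
        simpa using ((hasDerivAt_id (0:ℝ)).mul_const (B r j)).const_add (A r j)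
      have := h1.fun_mul h2
      simpa using this
    convert hsum using 1
    simp [Matrix.mul_apply, Matrix.add_apply, Finset.sum_add_distrib]
    ring
  -- derivative of the determinant
  have hQ : HasDerivAt Qf (Matrix.trace ((Aᵀ * A).adjugate * (Aᵀ * B + Bᵀ * A))) 0 := by
    have heq : Qf = fun t => Gt t 0 0 * Gt t 1 1 - Gt t 0 1 * Gt t 1 0 := by
      funext t; rw [hQf]; exact Matrix.det_fin_two _
    rw [heq]
    have := ((hent 0 0).fun_mul (hent 1 1)).fun_sub ((hent 0 1).fun_mul (hent 1 0))
    refine this.congr_deriv ?_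
    rw [hG0]
    simp [Matrix.trace_fin_two, Matrix.adjugate_fin_two, Matrix.mul_apply, Matrix.vecMul,
      dotProduct, Fin.sum_univ_two, Fin.sum_univ_three, Matrix.add_apply]
    ring
  -- derivative of the adjugate pairing
  have hN : HasDerivAt Nf (a ⬝ᵥ ((Aᵀ * B + Bᵀ * A).adjugate *ᵥ b)) 0 := by
    have heq : Nf = fun t => a 0 * b 0 * Gt t 1 1 - a 0 * b 1 * Gt t 0 1
        - a 1 * b 0 * Gt t 1 0 + a 1 * b 1 * Gt t 0 0 := by
      funext t
      rw [hNf]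
      simp [Matrix.adjugate_fin_two, Matrix.mulVec, dotProduct, Fin.sum_univ_two]
      ring
    rw [heq]
    have := ((((hent 1 1).const_mul (a 0 * b 0)).fun_sub
      ((hent 0 1).const_mul (a 0 * b 1))).fun_sub
      ((hent 1 0).const_mul (a 1 * b 0))).fun_add
      ((hent 0 0).const_mul (a 1 * b 1))
    refine this.congr_deriv ?_
    simp [Matrix.adjugate_fin_two, Matrix.mulVec, dotProduct, Fin.sum_univ_two]
    ring
  -- the function in scalar form
  have hfun : (fun t : ℝ =>
      (gradVec (fun i => p i + t • V i) f T ⬝ᵥ gradVec (fun i => p i + t • V i) g T) *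
        faceArea (fun i => p i + t • V i) T)
      = fun t => Nf t / Qf t * (Real.sqrt (Qf t) / 2) := by
    funext t
    have hE : faceE (fun i => p i + t • V i) T = A + t • B := faceE_deform p V t T
    rw [area_sqrtDet]
    simp only [gradVec, gradCoeff, hE, ← ha, ← hb]
    rw [inner_formula]
  rw [hfun]
  -- assemble the derivative
  have hsq : HasDerivAt (fun t => Real.sqrt (Qf t))
      (Matrix.trace ((Aᵀ * A).adjugate * (Aᵀ * B + Bᵀ * A)) / (2 * Real.sqrt (Qf 0))) 0 :=
    hQ.sqrt (by rw [hQ0]; exact hd)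
  have hdivd : HasDerivAt (fun t => Nf t / Qf t)
      ((a ⬝ᵥ ((Aᵀ * B + Bᵀ * A).adjugate *ᵥ b) * Qf 0 -
        Nf 0 * Matrix.trace ((Aᵀ * A).adjugate * (Aᵀ * B + Bᵀ * A))) / Qf 0 ^ 2) 0 :=
    hN.div hQ (by rw [hQ0]; exact hd)
  have htot := hdivd.fun_mul (hsq.div_const 2)
  refine htot.congr_deriv ?_
  rw [hQ0, hN0]
  -- identify strain, div, inner, area
  have hstrain : strainOnGrads p V f g T =
      ((a ⬝ᵥ ((Aᵀ * A).adjugate *ᵥ b)) *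
          Matrix.trace ((Aᵀ * A).adjugate * (Aᵀ * B + Bᵀ * A))
        - (a ⬝ᵥ ((Aᵀ * B + Bᵀ * A).adjugate *ᵥ b)) * (Aᵀ * A).det) / (Aᵀ * A).det ^ 2 := by
    simp only [strainOnGrads, gradVec, gradCoeff, ← hA, ← hB, ← ha, ← hb]
    exact strain_formula A B a b hd
  have hdiv : faceDiv p V T =
      Matrix.trace ((Aᵀ * A).adjugate * (Aᵀ * B + Bᵀ * A)) / (2 * (Aᵀ * A).det) := by
    simp only [faceDiv, ← hA, ← hB]
    exact div_formula A B hd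
  have hinner : gradVec p f T ⬝ᵥ gradVec p g T =
      (a ⬝ᵥ ((Aᵀ * A).adjugate *ᵥ b)) / (Aᵀ * A).det := by
    simp only [gradVec, gradCoeff, ← hA, ← ha, ← hb]
    exact inner_formula A a b
  have harea : faceArea p T = Real.sqrt ((Aᵀ * A).det) / 2 := by
    rw [area_sqrtDet, hA]
  rw [hstrain, hdiv, hinner, harea]
  -- final scalar identity
  set s := Real.sqrt ((Aᵀ * A).det) with hs
  have hspos : 0 < s := Real.sqrt_pos.mpr hdpos
  have hds : (Aᵀ * A).det = s ^ 2 := (Real.sq_sqrt hdpos.le).symm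
  rw [hds]
  set N0 := a ⬝ᵥ ((Aᵀ * A).adjugate *ᵥ b)
  set Q' := Matrix.trace ((Aᵀ * A).adjugate * (Aᵀ * B + Bᵀ * A))
  set N' := a ⬝ᵥ ((Aᵀ * B + Bᵀ * A).adjugate *ᵥ b)
  have hsne : s ≠ 0 := hspos.ne'
  field_simp
  ring

/-- The discrete infinitesimal shape differences satisfy the exact
decomposition `fᵀ W E^V_C g = fᵀ W E^V g + Σ_{T∈F} div(V)_T ⟨∇f, ∇g⟩_T μ(T)` for all
piecewise-linear functions `f, g`.

Here `fᵀ W E^V_C g` is the derivative at `t = 0` of the discrete conformal shape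
difference form `Σ_T ⟨∇_t f, ∇_t g⟩ μ_t(T)` (gradients *and* areas on the deformed mesh
`p_i^t = p_i + tV_i`), while `fᵀ W E^V g = −Σ_T (L_V g)(∇f, ∇g)_T μ(T)` is the discrete
functional deformation field (unified/isometric infinitesimal shape difference), and
`div(V)_T = Tr((EᵀE)⁻¹ Eᵀ (∇̄_E V))`. -/
theorem discrete_infinitesimal_shape_difference_decomposition
    (n : ℕ) (F : Finset (Fin n × Fin n × Fin n))
    (p V : Fin n → Fin 3 → ℝ)
    (hnd : ∀ T ∈ F, IsUnit ((faceE p T)ᵀ * faceE p T).det)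
    (f g : Fin n → ℝ)
    (c : ℝ)
    (hEC : HasDerivAt
      (fun t : ℝ => ∑ T ∈ F,
        (gradVec (fun i => p i + t • V i) f T ⬝ᵥ gradVec (fun i => p i + t • V i) g T) *
          faceArea (fun i => p i + t • V i) T) c 0) :
    c = (-∑ T ∈ F, strainOnGrads p V f g T * faceArea p T) +
      ∑ T ∈ F, faceDiv p V T * (gradVec p f T ⬝ᵥ gradVec p g T) * faceArea p T := by
  have hsum : HasDerivAt
      (fun t : ℝ => ∑ T ∈ F,
        (gradVec (fun i => p i + t • V i) f T ⬝ᵥ gradVec (fun i => p i + t • V i) g T) *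
          faceArea (fun i => p i + t • V i) T)
      (∑ T ∈ F, (-(strainOnGrads p V f g T * faceArea p T) +
        faceDiv p V T * (gradVec p f T ⬝ᵥ gradVec p g T) * faceArea p T)) 0 :=
    HasDerivAt.fun_sum fun T hT => key_deriv p V f g T (hnd T hT)
  rw [hEC.unique hsum, Finset.sum_add_distrib]
  congr 1
  rw [← Finset.sum_neg_distrib]
end

section
/- Let φ : M' → M be a diffeomorphism and π : M → M a self-map; set ψ = φ^{-1} ∘ π ∘ φ. Then the unified shape difference of ψ equals the identity (i.e., ψ is an isometry of M') if and only if D_I^π C_π^{-1} D_I^φ C_π = D_I^φ, where C_π is the functional map of π and D_I^π, D_I^φ are the unified shape differences of π and φ. -/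
/-- Let `φ : M' → M` be a diffeomorphism and `π : M → M` a self-map;
set `ψ = φ⁻¹ ∘ π ∘ φ`.  Then the unified shape difference of `ψ` equals the identity
(equivalently, `ψ` is an isometry of `M'`) if and only if
`D_I^π C_π⁻¹ D_I^φ C_π = D_I^φ`.

Model: `FM`, `FM'` are the function spaces of `M` and `M'`; `WM`, `WM'` are the (invertible)
stiffness operators representing the `H¹₀` inner products; `Cφ : FM → FM'` and
`Cπ : FM → FM` are the (invertible) functional maps of `φ` and `π`, so that the functional
map of `ψ` is `Cψ = Cφ ∘ Cπ ∘ Cφ⁻¹`.  The unified shape difference of a map `T : N → M`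
with functional map `C_T` is `D_I^T = W_M⁻¹ C_T⁻¹ W_N C_T`; these are the hypotheses
`hDφ`, `hDπ`, `hDψ`.  `IsIsomψ` is the statement that `ψ` is an isometry, which by
Proposition (`Thm:isometry`) is equivalent to `D_I^ψ = Id` (hypothesis `hiso`). -/
theorem intrinsic_symmetrization_criterion
    {FM FM' : Type*} [AddCommGroup FM] [Module ℝ FM] [AddCommGroup FM'] [Module ℝ FM']
    (WM : FM ≃ₗ[ℝ] FM) (WM' : FM' ≃ₗ[ℝ] FM')
    (Cφ : FM ≃ₗ[ℝ] FM') (Cπ : FM ≃ₗ[ℝ] FM)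
    (Cψ : FM' ≃ₗ[ℝ] FM')
    (hCψ : Cψ = (Cφ.symm.trans Cπ).trans Cφ)  -- Cψ = Cφ ∘ Cπ ∘ Cφ⁻¹
    (Dφ : FM →ₗ[ℝ] FM) (Dπ : FM →ₗ[ℝ] FM) (Dψ : FM' →ₗ[ℝ] FM')
    (hDφ : Dφ = WM.symm.toLinearMap ∘ₗ Cφ.symm.toLinearMap ∘ₗ
      WM'.toLinearMap ∘ₗ Cφ.toLinearMap)
    (hDπ : Dπ = WM.symm.toLinearMap ∘ₗ Cπ.symm.toLinearMap ∘ₗ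
      WM.toLinearMap ∘ₗ Cπ.toLinearMap)
    (hDψ : Dψ = WM'.symm.toLinearMap ∘ₗ Cψ.symm.toLinearMap ∘ₗ
      WM'.toLinearMap ∘ₗ Cψ.toLinearMap)
    (IsIsomψ : Prop)
    (hiso : IsIsomψ ↔ Dψ = LinearMap.id) :
    IsIsomψ ↔
      (Dπ ∘ₗ Cπ.symm.toLinearMap ∘ₗ Dφ ∘ₗ Cπ.toLinearMap = Dφ) := by
  subst hCψ hDφ hDπ hDψ
  rw [hiso]
  simp only [LinearMap.ext_iff, LinearMap.comp_apply, LinearEquiv.coe_coe,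
    LinearEquiv.trans_apply, LinearEquiv.symm_trans_apply, LinearMap.id_apply,
    LinearEquiv.apply_symm_apply, LinearEquiv.symm_apply_apply,
    LinearEquiv.symm_apply_eq, EmbeddingLike.apply_eq_iff_eq]
  constructor
  · intro h x
    have := h (Cφ x)
    simpa using this
  · intro h x
    have := h (Cφ.symm x)
    simpa using this
end
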